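/- Let a, b > 0 and let k : ℝ → (0,1) be a solution of k' = k(1−k)((1−a/b)k + a/b) on ℝ. Then k is strictly increasing, k(x) → 0 as x → −∞, and k(x) → 1 as x → +∞. -/

import Mathlib

open Filter

theorem stmt_5 (a b : ℝ) (ha : 0 < a) (hb : 0 < b) (k : ℝ → ℝ)
    (hk : ∀ x, k x ∈ Set.Ioo (0:ℝ) 1)
    (hode : ∀ x, HasDerivAt k (k x * (1 - k x) * ((1 - a / b) * k x + a / b)) x) :
    StrictMono k ∧ Tendsto k atBot (nhds 0) ∧ Tendsto k atTop (nhds 1) := by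
  have hr0 : 0 < a / b := div_pos ha hb
  set r := a / b with hrdef
  set f : ℝ → ℝ := fun t => t * (1 - t) * ((1 - r) * t + r) with hf
  have hfc : Continuous f := by continuity
  have hfpos : ∀ t : ℝ, 0 < t → t < 1 → 0 < f t := by
    intro t h0 h1
    simp only [hf]
    nlinarith [mul_pos (mul_pos h0 (sub_pos.2 h1)) h0,
      mul_pos (mul_pos h0 (sub_pos.2 h1)) (mul_pos hr0 (sub_pos.2 h1))]
  have hdiff : Differentiable ℝ k := fun x => (hode x).differentiableAt
  have hderiv : ∀ x, deriv k x = f (k x) := fun x => (hode x).deriv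
  have hmono : StrictMono k := by
    apply strictMono_of_deriv_pos
    intro x
    rw [hderiv x]
    exact hfpos _ (hk x).1 (hk x).2
  -- generic growth lemma via monotonicity of k y - c/2 * y on convex sets
  have key : ∀ (c : ℝ) (s : Set ℝ), Convex ℝ s →
      (∀ y ∈ s, c / 2 ≤ f (k y)) → ∀ x ∈ s, ∀ y ∈ s, x ≤ y →
      k x + c / 2 * (y - x) ≤ k y := by
    intro c s hs hbound x hx y hy hxy
    have hg : MonotoneOn (fun y => k y - c / 2 * y) s := by
      apply monotoneOn_of_deriv_nonneg hs
      · exact (hdiff.continuous.sub (continuous_const.mul continuous_id)).continuousOn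
      · intro z hz
        exact ((hode z).sub ((hasDerivAt_id z).const_mul (c / 2))).differentiableAt.differentiableWithinAt
      · intro z hz
        have hz' : z ∈ s := interior_subset hz
        have : deriv (fun y => k y - c / 2 * y) z = f (k z) - c / 2 := by
          have := ((hode z).sub ((hasDerivAt_id z).const_mul (c / 2))).deriv
          exact this.trans (by simp [hf])
        rw [this]
        linarith [hbound z hz']
    have := hg hx hy hxy
    simp only at this
    linarith
  refine ⟨hmono, ?_, ?_⟩
  · -- limit at -∞
    have hbdd : BddBelow (Set.range k) := ⟨0, by rintro _ ⟨x, rfl⟩; exact (hk x).1.le⟩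
    have hlim : Tendsto k atBot (nhds (⨅ x, k x)) := tendsto_atBot_ciInf hmono.monotone hbdd
    set M := ⨅ x, k x with hM
    have hM0 : 0 ≤ M := le_ciInf fun x => (hk x).1.le
    have hMle : M ≤ k 0 := ciInf_le hbdd 0
    have hM1 : M < 1 := lt_of_le_of_lt hMle (hk 0).2
    rcases eq_or_lt_of_le hM0 with h | h
    · rwa [← h] at hlim
    · exfalso
      set c := f M with hc
      have hc0 : 0 < c := hfpos _ h hM1
      have hdt : Tendsto (fun x => f (k x)) atBot (nhds c) := (hfc.tendsto M).comp hlim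
      have hev : ∀ᶠ x in atBot, c / 2 < f (k x) :=
        hdt.eventually (eventually_gt_nhds (half_lt_self hc0))
      obtain ⟨X, hX⟩ := eventually_atBot.1 hev
      set y := X - 2 * (k X + 1) / c with hy
      have hyX : y ≤ X := by
        have : 0 < 2 * (k X + 1) / c := div_pos (by nlinarith [(hk X).1]) hc0
        · simp only [hy]; linarith
      have hgrow : k y + c / 2 * (X - y) ≤ k X := by
        apply key c (Set.Iic X) (convex_Iic X)
        · intro z hz; exact (hX z hz).le
        · exact hyX
        · exact le_refl X
        · exact hyX
      have hcXy : c / 2 * (X - y) = k X + 1 := by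
        simp only [hy]
        field_simp
        ring
      have := (hk y).1
      linarith [hgrow, hcXy]
  · -- limit at +∞
    have hbdd : BddAbove (Set.range k) := ⟨1, by rintro _ ⟨x, rfl⟩; exact (hk x).2.le⟩
    have hlim : Tendsto k atTop (nhds (⨆ x, k x)) := tendsto_atTop_ciSup hmono.monotone hbdd
    set L := ⨆ x, k x with hL
    have hL1 : L ≤ 1 := ciSup_le fun x => (hk x).2.le
    have hLge : k 0 ≤ L := le_ciSup hbdd 0
    have hL0 : 0 < L := lt_of_lt_of_le (hk 0).1 hLge
    rcases eq_or_lt_of_le hL1 with h | h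
    · rwa [h] at hlim
    · exfalso
      set c := f L with hc
      have hc0 : 0 < c := hfpos _ hL0 h
      have hdt : Tendsto (fun x => f (k x)) atTop (nhds c) := (hfc.tendsto L).comp hlim
      have hev : ∀ᶠ x in atTop, c / 2 < f (k x) :=
        hdt.eventually (eventually_gt_nhds (half_lt_self hc0))
      obtain ⟨X, hX⟩ := eventually_atTop.1 hev
      set y := X + 2 * 2 / c with hy
      have hyX : X ≤ y := by
        have : 0 < 2 * 2 / c := div_pos (by norm_num) hc0
        · simp only [hy]; linarith
      have hgrow : k X + c / 2 * (y - X) ≤ k y := by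
        apply key c (Set.Ici X) (convex_Ici X)
        · intro z hz; exact (hX z hz).le
        · exact le_refl X
        · exact hyX
        · exact hyX
      have hcXy : c / 2 * (y - X) = 2 := by
        simp only [hy]
        field_simp
        ring
      have := (hk y).2
      have hkX := (hk X).1
      linarith [hgrow, hcXy]
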